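/- arXiv:2206.02477 — 2 statements merged into one kernel-verified Lean document; each statement's English description precedes it below -/
import Mathlib

section
/- Let μ, L > 0 and σ² ≥ 0 with L ≥ 2μ and σ² ≤ μ(L − μ). Then there exists n₀ ∈ ℕ with n₀ ≥ 3, depending only on μ, σ² and L, such that for every n ≥ n₀ the robust thresholds associated with 𝒫ᵢ = P₂(μ,σ²,L) for all i = 1,…,n satisfy: T(n) = 0; T(i) = L·(1 − (1 − μ/L)·((L−μ)²/((L−μ)² + σ²))^{n−1−i}) for n − n₀ + 1 ≤ i ≤ n − 1; and T(i) = μ + (σ²/μ)·(1 − (σ²/(μ² + σ²))^{n−n₀−i}) + T(n − n₀ + 1)·(σ²/(σ² + μ²))^{n−n₀+1−i} for 1 ≤ i ≤ n − n₀. -/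
open MeasureTheory

/-- Backward robust thresholds: `robustTAux Ps n k = T(n - k)`, where
`T(n) = 0` and `T(i) = inf_{P ∈ Ps (i+1)} ∫ max (T (i+1)) x dP`. -/
noncomputable def robustTAux (Ps : ℕ → Set (Measure ℝ)) (n : ℕ) : ℕ → ℝ
  | 0 => 0
  | k + 1 => sInf ((fun P => ∫ x, max (robustTAux Ps n k) x ∂P) '' Ps (n - k))

/-- The robust threshold `T(i)` for `0 ≤ i ≤ n`. -/
noncomputable def robustT (Ps : ℕ → Set (Measure ℝ)) (n i : ℕ) : ℝ :=
  robustTAux Ps n (n - i)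

/-- The two-point measure `p·δ_a + (1-p)·δ_b`. -/
noncomputable def twoPoint (p a b : ℝ) : Measure ℝ :=
  ENNReal.ofReal p • Measure.dirac a + ENNReal.ofReal (1 - p) • Measure.dirac b

/-- `P₂(μ,σ²,L)`: two-point distributions `p·δ_a + (1-p)·δ_b` with `0 ≤ a ≤ b ≤ L`,
`p ∈ [0,1]`, mean `μ` and second moment `μ² + σ²`. -/
noncomputable def P2set (μ s2 L : ℝ) : Set (Measure ℝ) :=
  {P | ∃ p a b : ℝ, 0 ≤ a ∧ a ≤ b ∧ b ≤ L ∧ 0 ≤ p ∧ p ≤ 1 ∧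
    p * a + (1 - p) * b = μ ∧ p * a ^ 2 + (1 - p) * b ^ 2 = μ ^ 2 + s2 ∧
    P = twoPoint p a b}

set_option maxHeartbeats 1000000

lemma lb_alg (μ L s2 t p a b : ℝ) (hμ : 0 < μ) (hs2 : 0 ≤ s2) (hμL : μ < L)
    (ha : 0 ≤ a) (hab : a ≤ b) (hbL : b ≤ L) (hp0 : 0 ≤ p) (hp1 : p ≤ 1)
    (hmean : p * a + (1 - p) * b = μ) (hsec : p * a ^ 2 + (1 - p) * b ^ 2 = μ ^ 2 + s2)
    (ht1 : μ ≤ t) :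
    min (μ + s2 / (μ ^ 2 + s2) * t) (L - (L - t) * ((L - μ) ^ 2 / ((L - μ) ^ 2 + s2)))
      ≤ p * max t a + (1 - p) * max t b := by
  have hkey : (μ - a) * (b - μ) = s2 := by linear_combination hsec - (a + b) * hmean
  have haμ : a ≤ μ := by nlinarith [hkey]
  have hμb : μ ≤ b := by nlinarith [hkey]
  have hden1 : (0:ℝ) < μ ^ 2 + s2 := by positivity
  have hD : (0:ℝ) < (L - μ) ^ 2 + s2 :=
    add_pos_of_pos_of_nonneg (pow_pos (sub_pos.2 hμL) 2) hs2
  have e1 : s2 / (μ ^ 2 + s2) * (μ ^ 2 + s2) = s2 := div_mul_cancel₀ _ hden1.ne'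
  have e2 : (L - μ) ^ 2 / ((L - μ) ^ 2 + s2) * ((L - μ) ^ 2 + s2) = (L - μ) ^ 2 :=
    div_mul_cancel₀ _ hD.ne'
  have hmta : max t a = t := max_eq_left (le_trans haμ ht1)
  rcases le_or_gt b t with hbt | htb
  · -- b ≤ t : value = t
    have hmtb : max t b = t := max_eq_left hbt
    rw [hmta, hmtb]
    have h1 : μ + s2 / (μ ^ 2 + s2) * t ≤ t := by
      rw [← sub_nonneg]
      have hq : (t - (μ + s2 / (μ ^ 2 + s2) * t)) * (μ ^ 2 + s2) = μ * ((t - μ) * μ - s2) := by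
        linear_combination (-t) * e1
      have hs : s2 ≤ μ * (t - μ) := by nlinarith [hkey]
      have : 0 ≤ (t - (μ + s2 / (μ ^ 2 + s2) * t)) * (μ ^ 2 + s2) := by
        rw [hq]; nlinarith
      exact (mul_nonneg_iff_of_pos_right hden1).mp this
    calc min _ _ ≤ μ + s2 / (μ ^ 2 + s2) * t := min_le_left _ _
      _ ≤ t := h1
      _ = p * t + (1 - p) * t := by ring
  · -- t < b
    have hmtb : max t b = b := max_eq_right htb.le
    rw [hmta, hmtb]
    have hba : 0 < b - a := by linarith
    rcases le_or_gt (μ ^ 2 + s2 + t * a) (2 * t * μ) with hE | hE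
    · -- branch 1
      refine le_trans (min_le_left _ _) ?_
      rw [← sub_nonneg]
      have key : (p * t + (1 - p) * b - (μ + s2 / (μ ^ 2 + s2) * t)) * ((b - a) * (μ ^ 2 + s2))
          = (b - μ) * (a * (2 * t * μ - μ ^ 2 - s2 - t * a)) := by
        linear_combination ((b - t) * (μ ^ 2 + s2)) * hmean + (t * (μ - a)) * hkey
          + (-(t * (b - a))) * e1
      have hpos : 0 ≤ (p * t + (1 - p) * b - (μ + s2 / (μ ^ 2 + s2) * t))
          * ((b - a) * (μ ^ 2 + s2)) := by
        rw [key]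
        have h2 : 0 ≤ 2 * t * μ - μ ^ 2 - s2 - t * a := by linarith
        exact mul_nonneg (by linarith) (mul_nonneg ha h2)
      exact (mul_nonneg_iff_of_pos_right (mul_pos hba hden1)).mp hpos
    · -- branch 2
      refine le_trans (min_le_right _ _) ?_
      rw [← sub_nonneg]
      have hx : 0 < μ - a := by
        rcases eq_or_lt_of_le haμ with h | h
        · exfalso; nlinarith [hkey]
        · linarith
      have id3 : (μ - a) * ((b - μ) - 2 * (t - μ) - (μ - a))
          = (μ ^ 2 + s2 + t * a - 2 * t * μ) + a * (t - a) := by linear_combination hkey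
      have step3 : 0 ≤ (b - μ) - 2 * (t - μ) - (μ - a) := by
        by_contra h
        push_neg at h
        nlinarith [mul_pos hx (neg_pos.2 h), mul_nonneg ha (by linarith : (0:ℝ) ≤ t - a)]
      have key2 : (p * t + (1 - p) * b - (L - (L - t) * ((L - μ) ^ 2 / ((L - μ) ^ 2 + s2))))
            * ((b - a) * ((L - μ) ^ 2 + s2))
          = (μ - a) * (L - b) * ((b - t) * (L + b - 2 * μ) - (b - μ) * (b - a))
            + ((b - a) * (L - μ) - (b - μ) * (t - a)) * ((μ - a) * (b - μ) - s2) := by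
        linear_combination ((b - t) * ((L - μ) ^ 2 + s2)) * hmean
          + ((L - t) * (b - a)) * e2
      have hbr : 0 ≤ (b - t) * (L + b - 2 * μ) - (b - μ) * (b - a) := by
        have hid : (b - t) * (L + b - 2 * μ) - (b - μ) * (b - a)
            = (L - b) * (b - t) + (b - μ) * ((b - μ) - 2 * (t - μ) - (μ - a)) := by ring
        rw [hid]
        have h1 : 0 ≤ (L - b) * (b - t) := mul_nonneg (by linarith) (by linarith)
        have h2 : 0 ≤ (b - μ) * ((b - μ) - 2 * (t - μ) - (μ - a)) :=
          mul_nonneg (by linarith) step3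
        linarith
      have hpos : 0 ≤ (p * t + (1 - p) * b - (L - (L - t) * ((L - μ) ^ 2 / ((L - μ) ^ 2 + s2))))
            * ((b - a) * ((L - μ) ^ 2 + s2)) := by
        rw [key2, hkey, sub_self, mul_zero, add_zero]
        exact mul_nonneg (mul_nonneg hx.le (by linarith)) hbr
      exact (mul_nonneg_iff_of_pos_right (mul_pos hba hD)).mp hpos


lemma integral_twoPoint (p a b t : ℝ) (hp0 : 0 ≤ p) (hp1 : p ≤ 1) :
    ∫ x, max t x ∂(twoPoint p a b) = p * max t a + (1 - p) * max t b := by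
  have hd : ∀ c : ℝ, Integrable (fun x => max t x) (Measure.dirac c) := by
    intro c
    have h : (fun x : ℝ => max t x) =ᵐ[Measure.dirac c] fun _ => max t c := by
      rw [MeasureTheory.ae_dirac_eq]
      exact Filter.eventually_pure.2 rfl
    exact (integrable_const _).congr h.symm
  rw [twoPoint, integral_add_measure ((hd a).smul_measure ENNReal.ofReal_ne_top)
      ((hd b).smul_measure ENNReal.ofReal_ne_top),
    integral_smul_measure, integral_smul_measure, integral_dirac, integral_dirac,
    ENNReal.toReal_ofReal hp0, ENNReal.toReal_ofReal (by linarith : (0:ℝ) ≤ 1 - p)]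
  simp [smul_eq_mul]

section
variable (μ L s2 : ℝ) (hμ : 0 < μ) (hL : 0 < L) (hs2 : 0 ≤ s2)
  (h2μ : 2 * μ ≤ L) (hfeas : s2 ≤ μ * (L - μ))

include hμ h2μ in
lemma hμL' : μ < L := by linarith

include hμ hs2 h2μ hfeas in
lemma mem1 : twoPoint (s2 / (μ ^ 2 + s2)) 0 ((μ ^ 2 + s2) / μ) ∈ P2set μ s2 L := by
  have hden : (0:ℝ) < μ ^ 2 + s2 := by positivity
  refine ⟨s2 / (μ ^ 2 + s2), 0, (μ ^ 2 + s2) / μ, le_refl 0, by positivity, ?_, by positivity,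
    ?_, ?_, ?_, rfl⟩
  · rw [div_le_iff₀ hμ]; nlinarith
  · rw [div_le_one hden]; nlinarith
  · field_simp; ring
  · field_simp; ring

include hμ hs2 h2μ hfeas in
lemma mem2 : twoPoint ((L - μ) ^ 2 / ((L - μ) ^ 2 + s2)) (μ - s2 / (L - μ)) L
    ∈ P2set μ s2 L := by
  have hμL : μ < L := by linarith
  have hD : (0:ℝ) < (L - μ) ^ 2 + s2 :=
    add_pos_of_pos_of_nonneg (pow_pos (sub_pos.2 hμL) 2) hs2
  have hLμ : (0:ℝ) < L - μ := by linarith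
  refine ⟨(L - μ) ^ 2 / ((L - μ) ^ 2 + s2), μ - s2 / (L - μ), L, ?_, ?_, le_refl L,
    by positivity, ?_, ?_, ?_, rfl⟩
  · rw [sub_nonneg, div_le_iff₀ hLμ]; nlinarith
  · have : s2 / (L - μ) ≥ 0 := by positivity
    linarith
  · rw [div_le_one hD]; nlinarith
  · field_simp; ring
  · field_simp; ring
end

section
variable (μ L s2 : ℝ) (hμ : 0 < μ) (hL : 0 < L) (hs2 : 0 ≤ s2)
  (h2μ : 2 * μ ≤ L) (hfeas : s2 ≤ μ * (L - μ))

include hμ hL hs2 h2μ hfeas in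
lemma Fval (t : ℝ) (ht1 : μ ≤ t) (ht2 : t ≤ (μ ^ 2 + s2) / μ) :
    sInf ((fun P => ∫ x, max t x ∂P) '' P2set μ s2 L)
      = min (μ + s2 / (μ ^ 2 + s2) * t)
          (L - (L - t) * ((L - μ) ^ 2 / ((L - μ) ^ 2 + s2))) := by
  have hμL : μ < L := by linarith
  have hden : (0:ℝ) < μ ^ 2 + s2 := by positivity
  have hD : (0:ℝ) < (L - μ) ^ 2 + s2 :=
    add_pos_of_pos_of_nonneg (pow_pos (sub_pos.2 hμL) 2) hs2
  have htL : t ≤ L := by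
    rw [le_div_iff₀ hμ] at ht2; nlinarith
  have hq0 : (0:ℝ) ≤ s2 / (μ ^ 2 + s2) := by positivity
  have hq1 : s2 / (μ ^ 2 + s2) ≤ 1 := by rw [div_le_one hden]; nlinarith
  have hr0 : (0:ℝ) ≤ (L - μ) ^ 2 / ((L - μ) ^ 2 + s2) := by positivity
  have hr1 : (L - μ) ^ 2 / ((L - μ) ^ 2 + s2) ≤ 1 := by rw [div_le_one hD]; linarith
  -- value of M1
  have hv1 : (fun P => ∫ x, max t x ∂P) (twoPoint (s2 / (μ ^ 2 + s2)) 0 ((μ ^ 2 + s2) / μ))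
      = μ + s2 / (μ ^ 2 + s2) * t := by
    show ∫ x, max t x ∂_ = _
    rw [integral_twoPoint _ _ _ _ hq0 hq1,
      max_eq_left (by linarith : (0:ℝ) ≤ t), max_eq_right ht2]
    field_simp
    ring
  have hv2 : (fun P => ∫ x, max t x ∂P)
        (twoPoint ((L - μ) ^ 2 / ((L - μ) ^ 2 + s2)) (μ - s2 / (L - μ)) L)
      = L - (L - t) * ((L - μ) ^ 2 / ((L - μ) ^ 2 + s2)) := by
    have h1 : μ - s2 / (L - μ) ≤ t := by
      have : 0 ≤ s2 / (L - μ) := div_nonneg hs2 (by linarith)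
      linarith
    show ∫ x, max t x ∂_ = _
    rw [integral_twoPoint _ _ _ _ hr0 hr1, max_eq_left h1, max_eq_right htL]
    ring
  have hlb : ∀ y ∈ (fun P => ∫ x, max t x ∂P) '' P2set μ s2 L,
      min (μ + s2 / (μ ^ 2 + s2) * t) (L - (L - t) * ((L - μ) ^ 2 / ((L - μ) ^ 2 + s2))) ≤ y := by
    rintro y ⟨P, ⟨p, a, b, ha, hab, hbL, hp0, hp1, hmean, hsec, rfl⟩, rfl⟩
    show min _ _ ≤ ∫ x, max t x ∂_
    rw [integral_twoPoint _ _ _ _ hp0 hp1]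
    exact lb_alg μ L s2 t p a b hμ hs2 hμL ha hab hbL hp0 hp1 hmean hsec ht1
  refine le_antisymm ?_ (le_csInf ⟨_, Set.mem_image_of_mem _ (mem1 μ L s2 hμ hs2 h2μ hfeas)⟩ hlb)
  rcases le_total (μ + s2 / (μ ^ 2 + s2) * t)
      (L - (L - t) * ((L - μ) ^ 2 / ((L - μ) ^ 2 + s2))) with h | h
  · rw [min_eq_left h, ← hv1]
    exact csInf_le ⟨_, hlb⟩ (Set.mem_image_of_mem _ (mem1 μ L s2 hμ hs2 h2μ hfeas))
  · rw [min_eq_right h, ← hv2]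
    exact csInf_le ⟨_, hlb⟩ (Set.mem_image_of_mem _ (mem2 μ L s2 hμ hs2 h2μ hfeas))

include hμ hL hs2 h2μ hfeas in
lemma Fzero : sInf ((fun P => ∫ x, max 0 x ∂P) '' P2set μ s2 L) = μ := by
  have himg : (fun P => ∫ x, max 0 x ∂P) '' P2set μ s2 L = {μ} := by
    apply Set.eq_singleton_iff_nonempty_unique_mem.2
    constructor
    · exact ⟨_, Set.mem_image_of_mem _ (mem1 μ L s2 hμ hs2 h2μ hfeas)⟩
    · rintro y ⟨P, ⟨p, a, b, ha, hab, hbL, hp0, hp1, hmean, hsec, rfl⟩, rfl⟩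
      show ∫ x, max 0 x ∂_ = _
      rw [integral_twoPoint _ _ _ _ hp0 hp1, max_eq_right ha,
        max_eq_right (le_trans ha hab)]
      exact hmean
  rw [himg, csInf_singleton]
end

noncomputable def tkD (μ s2 L : ℝ) (k : ℕ) : ℝ :=
  L * (1 - (1 - μ / L) * ((L - μ) ^ 2 / ((L - μ) ^ 2 + s2)) ^ k)

noncomputable def sqD (μ s2 T : ℝ) (j : ℕ) : ℝ :=
  μ + s2 / μ * (1 - (s2 / (μ ^ 2 + s2)) ^ j) + T * (s2 / (μ ^ 2 + s2)) ^ (j + 1)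

lemma main_rec (μ L s2 : ℝ) (hμ : 0 < μ) (hL : 0 < L) (hs2 : 0 ≤ s2)
    (h2μ : 2 * μ ≤ L) (hfeas : s2 ≤ μ * (L - μ)) :
    ∃ n₀ : ℕ, 3 ≤ n₀ ∧ ∀ n k : ℕ,
      robustTAux (fun _ => P2set μ s2 L) n (k + 1)
        = if k + 2 ≤ n₀ then tkD μ s2 L k
          else sqD μ s2 (tkD μ s2 L (n₀ - 2)) (k + 1 - n₀) := by
  classical
  have hμL : μ < L := by linarith
  have hden : (0:ℝ) < μ ^ 2 + s2 := by positivity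
  have hD : (0:ℝ) < (L - μ) ^ 2 + s2 :=
    add_pos_of_pos_of_nonneg (pow_pos (sub_pos.2 hμL) 2) hs2
  set q : ℝ := s2 / (μ ^ 2 + s2) with hqdef
  set rr : ℝ := (L - μ) ^ 2 / ((L - μ) ^ 2 + s2) with hrrdef
  have e_q : q * (μ ^ 2 + s2) = s2 := div_mul_cancel₀ _ hden.ne'
  have e_rr : rr * ((L - μ) ^ 2 + s2) = (L - μ) ^ 2 := div_mul_cancel₀ _ hD.ne'
  have hq0 : 0 ≤ q := by positivity
  have hq1 : q ≤ 1 := by rw [hqdef, div_le_one hden]; nlinarith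
  have hrr0 : 0 ≤ rr := by positivity
  have hrr1 : rr ≤ 1 := by rw [hrrdef, div_le_one hD]; linarith
  set fix : ℝ := (μ ^ 2 + s2) / μ with hfixdef
  have e_fix : μ + q * fix = fix := by
    rw [hqdef, hfixdef]; field_simp
  have hμfix : μ ≤ fix := by
    rw [hfixdef, le_div_iff₀ hμ]; nlinarith
  have hfixL : fix ≤ L := by
    rw [hfixdef, div_le_iff₀ hμ]; nlinarith
  set A : ℝ := μ - L * (1 - rr) with hAdef
  set B : ℝ := rr - q with hBdef
  have hlin : ∀ x : ℝ, (L - (L - x) * rr) - (μ + q * x) = B * x - A := by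
    intro x; rw [hAdef, hBdef]; ring
  have hB0 : 0 ≤ B := by
    have hqrr : q ≤ rr := by
      rw [hqdef, hrrdef, div_le_div_iff₀ hden hD]; nlinarith
    rw [hBdef]; linarith
  have hμA : B * μ ≤ A := by
    have key : (μ + q * μ - (L - (L - μ) * rr)) * (((L - μ) ^ 2 + s2) * (μ ^ 2 + s2))
        = s2 * (L - 2 * μ) * (μ * (L - μ) - s2) := by
      linear_combination (μ * ((L - μ) ^ 2 + s2)) * e_q + ((L - μ) * (μ ^ 2 + s2)) * e_rr
    have h3 : 0 ≤ s2 * (L - 2 * μ) * (μ * (L - μ) - s2) :=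
      mul_nonneg (mul_nonneg hs2 (by linarith)) (by linarith)
    have h4 : L - (L - μ) * rr ≤ μ + q * μ := by
      have := (mul_nonneg_iff_of_pos_right (mul_pos hD hden)).mp (key ▸ h3)
      linarith
    have := hlin μ
    linarith
  have hfixA : A ≤ B * fix := by
    have h1 : fix ≤ L - (L - fix) * rr := by
      nlinarith [mul_nonneg (sub_nonneg.2 hfixL) (sub_nonneg.2 hrr1), e_fix]
    have h2 := hlin fix
    nlinarith [e_fix]
  -- tk sequence facts
  have tk0 : tkD μ s2 L 0 = μ := by
    rw [tkD]; field_simp; ring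
  have tkrec : ∀ k, L - (L - tkD μ s2 L k) * rr = tkD μ s2 L (k + 1) := by
    intro k; rw [tkD, tkD, ← hrrdef, pow_succ]; ring
  have tkLsub : ∀ k, L - tkD μ s2 L k = (L - μ) * rr ^ k := by
    intro k; rw [tkD, ← hrrdef]; field_simp; ring
  have tkL : ∀ k, tkD μ s2 L k ≤ L := by
    intro k
    nlinarith [tkLsub k, pow_nonneg hrr0 k, mul_nonneg (le_of_lt (sub_pos.2 hμL)) (pow_nonneg hrr0 k)]
  have tkmono : Monotone (tkD μ s2 L) := by
    apply monotone_nat_of_le_succ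
    intro k
    have e : tkD μ s2 L (k + 1) - tkD μ s2 L k = (L - μ) * ((1 - rr) * rr ^ k) := by
      rw [tkD, tkD, ← hrrdef, pow_succ]; field_simp; ring
    nlinarith [e, mul_nonneg (mul_nonneg (le_of_lt (sub_pos.2 hμL)) (sub_nonneg.2 hrr1)) (pow_nonneg hrr0 k)]
  have tkμ : ∀ k, μ ≤ tkD μ s2 L k := by
    intro k
    have := tkmono (Nat.zero_le k)
    rwa [tk0] at this
  -- existence of crossing
  have hex : ∃ k, A ≤ B * tkD μ s2 L k := by
    rcases eq_or_lt_of_le hB0 with hBz | hBp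
    · refine ⟨0, ?_⟩
      rw [← hBz, zero_mul]
      rw [← hBz, zero_mul] at hfixA
      exact hfixA
    · rcases eq_or_lt_of_le hs2 with hs2z | hs2p
      · refine ⟨0, ?_⟩
        rw [tk0]
        have hfm : fix = μ := by rw [hfixdef, ← hs2z]; field_simp; ring
        rw [hfm] at hfixA
        exact hfixA
      · have hrrlt : rr < 1 := by
          rw [hrrdef, div_lt_one hD]; linarith
        have hBfeas : 0 < μ * (L - μ) - s2 := by
          have hqrr : q < rr := by rw [hBdef] at hBp; linarith
          rw [hqdef, hrrdef, div_lt_div_iff₀ hden hD] at hqrr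
          nlinarith [hqrr]
        have hfixlt : fix < L := by
          rw [hfixdef, div_lt_iff₀ hμ]; nlinarith
        obtain ⟨k, hk⟩ := exists_pow_lt_of_lt_one
          (div_pos (sub_pos.2 hfixlt) (sub_pos.2 hμL)) hrrlt
        refine ⟨k, ?_⟩
        rw [lt_div_iff₀ (sub_pos.2 hμL)] at hk
        have hfixtk : fix ≤ tkD μ s2 L k := by nlinarith [tkLsub k]
        calc A ≤ B * fix := hfixA
          _ ≤ B * tkD μ s2 L k := mul_le_mul_of_nonneg_left hfixtk hB0
  set k0 : ℕ := Nat.find hex with hk0def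
  have hk0 : A ≤ B * tkD μ s2 L k0 := Nat.find_spec hex
  set n₀ : ℕ := max 3 (k0 + 2) with hn₀def
  refine ⟨n₀, le_max_left _ _, ?_⟩
  -- branch facts
  have hbr1 : ∀ j : ℕ, j + 3 ≤ n₀ → B * tkD μ s2 L j ≤ A := by
    intro j hj
    rcases Nat.lt_or_ge j k0 with h | h
    · have := Nat.find_min hex h
      push_neg at this
      linarith
    · have hj0 : j = 0 := by omega
      rw [hj0, tk0]
      exact hμA
  have hbr2 : A ≤ B * tkD μ s2 L (n₀ - 2) := by
    have hk0le : k0 ≤ n₀ - 2 := by omega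
    calc A ≤ B * tkD μ s2 L k0 := hk0
      _ ≤ B * tkD μ s2 L (n₀ - 2) := mul_le_mul_of_nonneg_left (tkmono hk0le) hB0
  -- invariant: tk j ≤ fix for j ≤ n₀ - 2
  have hBfix0 : B = 0 → fix = L := by
    intro hBz
    have : q = rr := by rw [hBdef] at hBz; linarith
    rw [hqdef, hrrdef] at this
    have h5 : s2 * ((L - μ) ^ 2 + s2) = (L - μ) ^ 2 * (μ ^ 2 + s2) := by
      field_simp at this
      linarith [this]
    have h6 : s2 = μ * (L - μ) := by nlinarith [h5]
    rw [hfixdef, h6]; field_simp; ring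
  have htkfix : ∀ j : ℕ, j + 2 ≤ n₀ → tkD μ s2 L j ≤ fix := by
    have step1 : ∀ j : ℕ, j + 3 ≤ n₀ → tkD μ s2 L j ≤ fix := by
      intro j hj
      rcases eq_or_lt_of_le hB0 with hBz | hBp
      · rw [hBfix0 hBz.symm]; exact tkL j
      · have h1 := hbr1 j hj
        have h2 := hfixA
        nlinarith
    intro j hj
    rcases Nat.lt_or_ge (j + 2) n₀ with h | h
    · exact step1 j (by omega)
    · have hj2 : j = n₀ - 2 := by omega
      have hj3 : j - 1 + 3 = n₀ := by omega
      have hrec := tkrec (j - 1)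
      have hjj : j - 1 + 1 = j := by omega
      rw [hjj] at hrec
      have h1 := hbr1 (j - 1) (by omega)
      have h2 := hlin (tkD μ s2 L (j - 1))
      have h3 : tkD μ s2 L j ≤ μ + q * tkD μ s2 L (j - 1) := by linarith [hrec]
      have h4 : tkD μ s2 L (j - 1) ≤ fix := step1 (j - 1) (by omega)
      nlinarith [e_fix]
  -- sq sequence facts
  have hTfix : tkD μ s2 L (n₀ - 2) ≤ fix := htkfix (n₀ - 2) (by omega)
  have hTμ : μ ≤ tkD μ s2 L (n₀ - 2) := tkμ _
  set T : ℝ := tkD μ s2 L (n₀ - 2) with hTdef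
  have sq0 : sqD μ s2 T 0 = μ + q * T := by
    rw [sqD, ← hqdef, pow_zero, pow_one]; ring
  have e_fix2 : q * (μ + s2 / μ) = s2 / μ := by
    rw [hqdef]; field_simp
  have e_fix3 : μ + s2 / μ = fix := by rw [hfixdef]; field_simp
  have sqrec : ∀ j, μ + q * sqD μ s2 T j = sqD μ s2 T (j + 1) := by
    intro j
    rw [sqD, sqD, ← hqdef]
    linear_combination e_fix2
  have hTg1 : T ≤ μ + q * T := by
    nlinarith [e_fix, mul_le_mul_of_nonneg_left hTfix (sub_nonneg.2 hq1)]
  have htksq : ∀ j, T ≤ sqD μ s2 T j ∧ sqD μ s2 T j ≤ fix := by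
    intro j
    induction j with
    | zero =>
      rw [sq0]
      constructor
      · exact hTg1
      · nlinarith [mul_le_mul_of_nonneg_left hTfix hq0, e_fix]
    | succ j ih =>
      rw [← sqrec j]
      constructor
      · calc T ≤ μ + q * T := hTg1
          _ ≤ μ + q * sqD μ s2 T j := by nlinarith [mul_le_mul_of_nonneg_left ih.1 hq0]
      · nlinarith [mul_le_mul_of_nonneg_left ih.2 hq0, e_fix]
  have hbrs : ∀ j, A ≤ B * sqD μ s2 T j := by
    intro j
    calc A ≤ B * T := hbr2
      _ ≤ B * sqD μ s2 T j := mul_le_mul_of_nonneg_left (htksq j).1 hB0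
  -- main induction
  intro n k
  have hstep : ∀ m : ℕ, robustTAux (fun _ => P2set μ s2 L) n (m + 1)
      = sInf ((fun P => ∫ x, max (robustTAux (fun _ => P2set μ s2 L) n m) x ∂P)
          '' P2set μ s2 L) := fun m => rfl
  have hn₀3 : 3 ≤ n₀ := le_max_left _ _
  induction k with
  | zero =>
    rw [if_pos (by omega : 0 + 2 ≤ n₀), hstep 0]
    have h0 : robustTAux (fun _ => P2set μ s2 L) n 0 = 0 := rfl
    rw [h0, Fzero μ L s2 hμ hL hs2 h2μ hfeas, tk0]
  | succ k ih =>
    rw [hstep (k + 1), ih]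
    rcases le_or_gt (k + 3) n₀ with hc1 | hc2
    · -- stay on tk branch
      rw [if_pos (by omega : k + 2 ≤ n₀)]
      rw [Fval μ L s2 hμ hL hs2 h2μ hfeas _ (tkμ k)
        (by rw [← hfixdef]; exact htkfix k (by omega)), ← hqdef, ← hrrdef]
      rw [min_eq_right (by linarith [hlin (tkD μ s2 L k), hbr1 k hc1])]
      rw [tkrec k, if_pos (by omega : k + 1 + 2 ≤ n₀)]
    · rcases le_or_gt (k + 2) n₀ with hc3 | hc4
      · -- transition step : k + 2 = n₀
        rw [if_pos hc3]
        rw [Fval μ L s2 hμ hL hs2 h2μ hfeas _ (tkμ k)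
          (by rw [← hfixdef]; exact htkfix k (by omega)), ← hqdef, ← hrrdef]
        have hkn : k = n₀ - 2 := by omega
        have hbr2' : A ≤ B * tkD μ s2 L k := by rw [hkn]; exact hbr2
        rw [min_eq_left (by linarith [hlin (tkD μ s2 L k), hbr2'])]
        rw [if_neg (by omega : ¬ k + 1 + 2 ≤ n₀)]
        have h1 : k + 1 + 1 - n₀ = 0 := by omega
        rw [h1, sq0, hkn]
      · -- stay on sq branch
        rw [if_neg (by omega : ¬ k + 2 ≤ n₀)]
        have hsb := htksq (k + 1 - n₀)
        rw [Fval μ L s2 hμ hL hs2 h2μ hfeas _ (le_trans hTμ hsb.1)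
          (by rw [← hfixdef]; exact hsb.2), ← hqdef, ← hrrdef]
        rw [min_eq_left (by linarith [hlin (sqD μ s2 T (k + 1 - n₀)), hbrs (k + 1 - n₀)])]
        rw [sqrec (k + 1 - n₀), if_neg (by omega : ¬ k + 1 + 2 ≤ n₀)]
        have h1 : k + 1 - n₀ + 1 = k + 1 + 1 - n₀ := by omega
        rw [h1]

theorem stmt3 (μ L s2 : ℝ) (hμ : 0 < μ) (hL : 0 < L) (hs2 : 0 ≤ s2)
    (h2μ : 2 * μ ≤ L) (hfeas : s2 ≤ μ * (L - μ)) :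
    ∃ n₀ : ℕ, 3 ≤ n₀ ∧ ∀ n : ℕ, n₀ ≤ n →
      (robustT (fun _ => P2set μ s2 L) n n = 0) ∧
      (∀ i : ℕ, n - n₀ + 1 ≤ i → i ≤ n - 1 →
        robustT (fun _ => P2set μ s2 L) n i
          = L * (1 - (1 - μ / L) * ((L - μ) ^ 2 / ((L - μ) ^ 2 + s2)) ^ (n - 1 - i))) ∧
      (∀ i : ℕ, 1 ≤ i → i ≤ n - n₀ →
        robustT (fun _ => P2set μ s2 L) n i
          = μ + s2 / μ * (1 - (s2 / (μ ^ 2 + s2)) ^ (n - n₀ - i))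
            + robustT (fun _ => P2set μ s2 L) n (n - n₀ + 1)
              * (s2 / (s2 + μ ^ 2)) ^ (n - n₀ + 1 - i)) := by
  obtain ⟨n₀, hn₀, hmain⟩ := main_rec μ L s2 hμ hL hs2 h2μ hfeas
  refine ⟨n₀, hn₀, ?_⟩
  intro n hn
  have hT : robustT (fun _ => P2set μ s2 L) n (n - n₀ + 1) = tkD μ s2 L (n₀ - 2) := by
    rw [robustT]
    have h1 : n - (n - n₀ + 1) = (n₀ - 2) + 1 := by omega
    rw [h1, hmain n (n₀ - 2), if_pos (by omega)]
  refine ⟨?_, ?_, ?_⟩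
  · rw [robustT, Nat.sub_self]; rfl
  · intro i hi1 hi2
    rw [robustT]
    have h1 : n - i = (n - i - 1) + 1 := by omega
    rw [h1, hmain n (n - i - 1), if_pos (by omega), tkD]
    have h2 : n - i - 1 = n - 1 - i := by omega
    rw [h2]
  · intro i hi1 hi2
    rw [robustT]
    have h1 : n - i = (n - i - 1) + 1 := by omega
    rw [h1, hmain n (n - i - 1), if_neg (by omega), hT, sqD]
    have h2 : n - i - 1 + 1 - n₀ = n - n₀ - i := by omega
    have h3 : n - n₀ - i + 1 = n - n₀ + 1 - i := by omega
    have h4 : s2 / (s2 + μ ^ 2) = s2 / (μ ^ 2 + s2) := by rw [add_comm]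
    rw [h2, h3, h4]
end

section
/- Let n ∈ ℕ, let 0 < μ < L and 0 ≤ d ≤ 2μ(L − μ)/L. Take 𝒫ᵢ = P(μ,d,L) for all i = 1,…,n. Then the robust thresholds satisfy T(i) = 2μ²/(2μ − d) − (2μ²/(2μ − d) − μ)·(d/(2μ))^{n−1−i} for every i with 0 ≤ i ≤ n − 1, and T(n) = 0. -/
open MeasureTheory

/-- `P(μ,d,L)`: Borel probability measures supported in `[0,L]` with mean `μ`
and mean absolute deviation `d`. -/
def PmdL (μ d L : ℝ) : Set (Measure ℝ) :=
  {P | IsProbabilityMeasure P ∧ P (Set.Icc 0 L) = 1 ∧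
       (∫ x, x ∂P) = μ ∧ (∫ x, |x - μ| ∂P) = d}

lemma integrable_dirac' {f : ℝ → ℝ} (hf : Measurable f) (a : ℝ) :
    Integrable f (Measure.dirac a) := by
  refine (integrable_const (f a)).congr ?_
  rw [ae_dirac_eq]
  exact Filter.eventually_pure.2 rfl

lemma step_lemma (μ d L t : ℝ) (hμ : 0 < μ) (hμL : μ < L) (hd0 : 0 ≤ d)
    (hd : d ≤ 2 * μ * (L - μ) / L) (ht : t = 0 ∨ μ ≤ t)
    (htM : t ≤ 2 * μ ^ 2 / (2 * μ - d)) :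
    sInf ((fun P => ∫ x, max t x ∂P) '' PmdL μ d L) = μ + d / (2 * μ) * t := by
  have hL : 0 < L := hμ.trans hμL
  have hdμ : d < 2 * μ := by
    have : 2 * μ * (L - μ) / L < 2 * μ := by
      rw [div_lt_iff₀ hL]
      nlinarith
    linarith
  have h2d : 0 < 2 * μ - d := by linarith
  set M : ℝ := 2 * μ ^ 2 / (2 * μ - d) with hM
  set q : ℝ := d / (2 * μ) with hq
  have hq0 : 0 ≤ q := by positivity
  have hq1 : q < 1 := by rw [hq, div_lt_one (by linarith)]; linarith
  have hqM : (1 - q) * M = μ := by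
    rw [hq, hM]; field_simp
  have hMμ : μ ≤ M := by
    rw [hM, le_div_iff₀ h2d]; nlinarith
  have hML : M ≤ L := by
    rw [hM, div_le_iff₀ h2d]
    have hd' : d * L ≤ 2 * μ * (L - μ) := (le_div_iff₀ hL).mp hd
    nlinarith
  have hM0 : 0 ≤ M := le_trans hμ.le hMμ
  have ht0 : 0 ≤ t := by rcases ht with h | h <;> [exact h.ge; linarith]
  -- the witness measure
  set Pstar : Measure ℝ := ENNReal.ofReal q • Measure.dirac 0
      + ENNReal.ofReal (1 - q) • Measure.dirac M with hPs
  have hint : ∀ f : ℝ → ℝ, Measurable f →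
      ∫ x, f x ∂Pstar = q * f 0 + (1 - q) * f M := by
    intro f hf
    rw [hPs, integral_add_measure
        (((integrable_dirac' hf 0).smul_measure ENNReal.ofReal_ne_top))
        (((integrable_dirac' hf M).smul_measure ENNReal.ofReal_ne_top)),
      integral_smul_measure, integral_smul_measure, integral_dirac, integral_dirac,
      ENNReal.toReal_ofReal hq0, ENNReal.toReal_ofReal (by linarith)]
    simp [smul_eq_mul]
  have hPmem : Pstar ∈ PmdL μ d L := by
    refine ⟨⟨?_⟩, ?_, ?_, ?_⟩
    · rw [hPs]
      simp only [Measure.add_apply, Measure.smul_apply, Measure.dirac_apply_of_mem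
        (Set.mem_univ _), smul_eq_mul, mul_one]
      rw [← ENNReal.ofReal_add hq0 (by linarith)]
      norm_num
    · rw [hPs]
      simp only [Measure.add_apply, Measure.smul_apply, smul_eq_mul]
      rw [Measure.dirac_apply_of_mem (Set.mem_Icc.2 ⟨le_refl (0:ℝ), hL.le⟩),
        Measure.dirac_apply_of_mem (Set.mem_Icc.2 ⟨hM0, hML⟩)]
      rw [mul_one, mul_one, ← ENNReal.ofReal_add hq0 (by linarith)]
      norm_num
    · rw [show (∫ x, x ∂Pstar) = ∫ x, (fun y => y) x ∂Pstar from rfl,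
        hint (fun y => y) measurable_id]
      simp only [mul_zero, zero_add]
      exact hqM
    · rw [hint (fun x => |x - μ|) ((measurable_id.sub measurable_const).abs)]
      rw [abs_of_nonpos (by linarith), abs_of_nonneg (by linarith)]
      rw [hq, hM]; field_simp; ring
  have hPval : (∫ x, max t x ∂Pstar) = μ + q * t := by
    rw [hint (fun x => max t x) (measurable_const.max measurable_id), max_eq_left ht0, max_eq_right htM]
    linarith [hqM]
  -- lower bound
  have hlow : ∀ P ∈ PmdL μ d L, μ + q * t ≤ ∫ x, max t x ∂P := by
    rintro P ⟨hP1, hP2, hP3, hP4⟩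
    have hcompl : P (Set.Icc (0:ℝ) L)ᶜ = 0 := by
      have h := measure_compl (μ := P) (s := Set.Icc (0:ℝ) L) measurableSet_Icc
        (measure_ne_top _ _)
      rw [hP2, measure_univ] at h
      simpa using h
    have hae : ∀ᵐ x ∂P, x ∈ Set.Icc (0:ℝ) L := by
      rw [ae_iff]
      simpa [Set.compl_def] using hcompl
    -- integrability of x and |x-μ|
    have hIx : Integrable (fun x => x) P := by
      refine (integrable_const L).mono' measurable_id.aestronglyMeasurable ?_
      filter_upwards [hae] with x hx
      rw [Real.norm_eq_abs, abs_of_nonneg hx.1]; exact hx.2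
    have hIabs : Integrable (fun x => |x - μ|) P := by
      refine (integrable_const (L + μ)).mono' ((measurable_id.sub measurable_const).abs).aestronglyMeasurable ?_
      filter_upwards [hae] with x hx
      rw [Real.norm_eq_abs, abs_abs]
      rcases abs_cases (x - μ) with ⟨h, _⟩ | ⟨h, _⟩ <;> rw [h] <;> nlinarith [hx.1, hx.2]
    have hImax : Integrable (fun x => max t x) P := by
      refine (integrable_const (max t L)).mono' (measurable_const.max measurable_id).aestronglyMeasurable ?_
      filter_upwards [hae] with x hx
      rw [Real.norm_eq_abs, abs_of_nonneg (le_trans ht0 (le_max_left _ _))]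
      exact max_le_max le_rfl hx.2
    -- minorant g
    have hg : ∀ᵐ x ∂P,
        t / 2 + (1 - t / (2 * μ)) * x + t / (2 * μ) * |x - μ| ≤ max t x := by
      filter_upwards [hae] with x hx
      rcases le_or_gt x μ with hxμ | hxμ
      · rw [abs_of_nonpos (by linarith)]
        rcases ht with h | h
        · subst h
          simpa using le_max_right t x
        · refine le_trans ?_ (le_max_left t x)
          have : t / 2 + (1 - t / (2 * μ)) * x + t / (2 * μ) * -(x - μ)
              = t + x * (μ - t) / μ := by field_simp; ring
          rw [this]
          have hnp : x * (μ - t) / μ ≤ 0 :=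
            div_nonpos_of_nonpos_of_nonneg
              (mul_nonpos_of_nonneg_of_nonpos hx.1 (by linarith)) hμ.le
          linarith
      · rw [abs_of_nonneg (by linarith)]
        refine le_trans (le_of_eq ?_) (le_max_right t x)
        field_simp; ring
    have hIg : Integrable (fun x => t / 2 + (1 - t / (2 * μ)) * x + t / (2 * μ) * |x - μ|) P := by
      exact ((integrable_const _).add (hIx.const_mul _)).add (hIabs.const_mul _)
    have := integral_mono_ae hIg hImax hg
    calc μ + q * t = ∫ x, (t / 2 + (1 - t / (2 * μ)) * x + t / (2 * μ) * |x - μ|) ∂P := by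
          rw [integral_add (f := fun x => t / 2 + (1 - t / (2 * μ)) * x)
              (g := fun x => t / (2 * μ) * |x - μ|)
              ((integrable_const _).add (hIx.const_mul _)) (hIabs.const_mul _),
            integral_add (f := fun _ => t / 2) (g := fun x => (1 - t / (2 * μ)) * x)
              (integrable_const _) (hIx.const_mul _),
            integral_const, integral_const_mul, integral_const_mul, hP3, hP4]
          simp only [probReal_univ, smul_eq_mul, one_mul]
          rw [hq]; field_simp; ring
      _ ≤ _ := this
  -- combine
  refine le_antisymm ?_ ?_
  · refine csInf_le ⟨μ + q * t, ?_⟩ ⟨Pstar, hPmem, hPval⟩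
    rintro y ⟨P, hP, rfl⟩
    exact hlow P hP
  · refine le_csInf ⟨_, Pstar, hPmem, rfl⟩ ?_
    rintro y ⟨P, hP, rfl⟩
    exact hlow P hP

theorem stmt4 (n : ℕ) (μ d L : ℝ) (hμ : 0 < μ) (hμL : μ < L) (hd0 : 0 ≤ d)
    (hd : d ≤ 2 * μ * (L - μ) / L) :
    (∀ i : ℕ, i + 1 ≤ n →
      robustT (fun _ => PmdL μ d L) n i
        = 2 * μ ^ 2 / (2 * μ - d)
          - (2 * μ ^ 2 / (2 * μ - d) - μ) * (d / (2 * μ)) ^ (n - 1 - i)) ∧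
    robustT (fun _ => PmdL μ d L) n n = 0 := by
  have hL : 0 < L := hμ.trans hμL
  have hdμ : d < 2 * μ := by
    have : 2 * μ * (L - μ) / L < 2 * μ := by
      rw [div_lt_iff₀ hL]; nlinarith
    linarith
  have h2d : 0 < 2 * μ - d := by linarith
  set M : ℝ := 2 * μ ^ 2 / (2 * μ - d) with hM
  set q : ℝ := d / (2 * μ) with hq
  have hq0 : 0 ≤ q := by positivity
  have hq1 : q < 1 := by rw [hq, div_lt_one (by linarith)]; linarith
  have hqM : (1 - q) * M = μ := by rw [hq, hM]; field_simp
  have hMμ : μ ≤ M := by rw [hM, le_div_iff₀ h2d]; nlinarith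
  have key : ∀ j : ℕ, robustTAux (fun _ => PmdL μ d L) n (j + 1)
      = M - (M - μ) * q ^ j := by
    intro j
    induction j with
    | zero =>
      rw [robustTAux]
      simp only [robustTAux]
      rw [step_lemma μ d L 0 hμ hμL hd0 hd (Or.inl rfl) (by rw [← hM]; positivity)]
      simp
    | succ j ih =>
      have hqj : q ^ j ≤ 1 := pow_le_one₀ hq0 hq1.le
      have hqj0 : 0 ≤ (M - μ) * q ^ j := mul_nonneg (by linarith) (pow_nonneg hq0 j)
      have htμ : μ ≤ M - (M - μ) * q ^ j := by nlinarith
      have htM : M - (M - μ) * q ^ j ≤ M := by linarith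
      rw [robustTAux]
      rw [ih]
      rw [step_lemma μ d L _ hμ hμL hd0 hd (Or.inr htμ) (hM ▸ htM)]
      rw [← hq]
      have : q * q ^ j = q ^ (j + 1) := (pow_succ' q j).symm
      nlinarith [this, hqM]
  constructor
  · intro i hi
    have hni : n - i = (n - 1 - i) + 1 := by omega
    rw [robustT, hni, key]
  · rw [robustT, Nat.sub_self]
    rfl
end
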